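/- Let p be a prime, R a commutative F_p-algebra, λ, a ∈ R, and C = R[X, 1/(a+λX)]. Suppose a is invertible in R/(λ). Then the R-algebra homomorphism r: C ⊗_R C → C ⊗_R R[T, 1/(1+λT)] determined by X⊗1 ↦ X⊗1 and 1⊗X ↦ λX⊗T + X⊗1 + a⊗T is an isomorphism, with inverse determined by X⊗1 ↦ X⊗1 and 1⊗T ↦ (1⊗X - X⊗1)/((a+λX)⊗1). -/

import Mathlib

open Polynomial TensorProduct


section helpers
variable {R : Type*} [CommRing R] (g : R[X]) {D : Type*} [CommRing D] [Algebra R D]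

theorem locAlgHom_ext (f₁ f₂ : Localization.Away g →ₐ[R] D)
    (h : f₁ (algebraMap R[X] _ X) = f₂ (algebraMap R[X] _ X)) : f₁ = f₂ := by
  have : f₁.toRingHom = f₂.toRingHom := by
    apply IsLocalization.ringHom_ext (Submonoid.powers g)
    exact congrArg AlgHom.toRingHom
      (Polynomial.algHom_ext (R := R)
        (f := f₁.comp (IsScalarTower.toAlgHom R R[X] (Localization.Away g)))
        (g := f₂.comp (IsScalarTower.toAlgHom R R[X] (Localization.Away g))) h)
  exact AlgHom.coe_ringHom_injective this

noncomputable def locLift (f : R[X] →ₐ[R] D) (hf : IsUnit (f g)) :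
    Localization.Away g →ₐ[R] D :=
  IsLocalization.liftAlgHom (M := Submonoid.powers g) (f := f) (by
    rintro ⟨y, n, rfl⟩
    simpa using hf.pow n)

@[simp] theorem locLift_algebraMap (f : R[X] →ₐ[R] D) (hf : IsUnit (f g)) (q : R[X]) :
    locLift g f hf (algebraMap R[X] _ q) = f q := by
  simp [locLift, IsLocalization.liftAlgHom_apply, IsLocalization.lift_eq]

theorem mapC (r : R) : algebraMap R[X] (Localization.Away g) (Polynomial.C r)
    = algebraMap R (Localization.Away g) r := by
  rw [IsScalarTower.algebraMap_apply R R[X] (Localization.Away g), Polynomial.algebraMap_eq]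
end helpers

section main
variable {R : Type*} [CommRing R] (lam a : R)

local notation "f1" => Polynomial.C a + Polynomial.C lam * (X : R[X])
local notation "f2" => (1 + Polynomial.C lam * (X : R[X]))

noncomputable abbrev CC := Localization.Away (f1)
noncomputable abbrev BB := Localization.Away (f2)
noncomputable abbrev xx : CC lam a := algebraMap R[X] _ X
noncomputable abbrev tt : BB lam := algebraMap R[X] _ X

-- a + λ x is a unit in CC
theorem hux : IsUnit (algebraMap R (CC lam a) a + algebraMap R (CC lam a) lam * xx lam a) := by
  have := IsLocalization.Away.algebraMap_isUnit (S := CC lam a) (f1)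
  simpa [mapC] using this

-- 1 + λ t is a unit in BB
theorem hut : IsUnit ((1 : BB lam) + algebraMap R (BB lam) lam * tt lam) := by
  have := IsLocalization.Away.algebraMap_isUnit (S := BB lam) (f2)
  simpa [mapC] using this

-- forward target element
noncomputable def sFor : CC lam a ⊗[R] BB lam :=
  (algebraMap R (CC lam a) lam * xx lam a) ⊗ₜ[R] tt lam + xx lam a ⊗ₜ[R] 1
    + (algebraMap R (CC lam a) a) ⊗ₜ[R] tt lam

theorem aeval_sFor_f1 : (aeval (sFor lam a)) (f1) =
    ((algebraMap R (CC lam a) a + algebraMap R (CC lam a) lam * xx lam a) ⊗ₜ[R] 1) *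
    (1 ⊗ₜ[R] ((1 : BB lam) + algebraMap R (BB lam) lam * tt lam)) := by
  simp only [map_add, map_mul, aeval_C, aeval_X, sFor]
  simp only [Algebra.TensorProduct.algebraMap_apply, Algebra.TensorProduct.tmul_mul_tmul,
    one_mul, mul_one, TensorProduct.tmul_add, TensorProduct.add_tmul, mul_add, add_mul]
  have key : ∀ c : CC lam a, c ⊗ₜ[R] ((algebraMap R (BB lam)) lam * tt lam)
      = ((algebraMap R (CC lam a)) lam * c) ⊗ₜ[R] tt lam := fun c => by
    rw [← Algebra.smul_def, ← Algebra.smul_def, TensorProduct.tmul_smul,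
      TensorProduct.smul_tmul']
  simp only [key]
  abel

theorem hFor : IsUnit ((aeval (sFor lam a)) (f1)) := by
  rw [aeval_sFor_f1]
  exact ((hux lam a).map (Algebra.TensorProduct.includeLeft :
      CC lam a →ₐ[R] CC lam a ⊗[R] BB lam)).mul
    ((hut lam).map (Algebra.TensorProduct.includeRight :
      BB lam →ₐ[R] CC lam a ⊗[R] BB lam))

noncomputable def rr : CC lam a ⊗[R] CC lam a →ₐ[R] CC lam a ⊗[R] BB lam :=
  Algebra.TensorProduct.lift Algebra.TensorProduct.includeLeft
    (locLift _ (aeval (sFor lam a)) (hFor lam a)) (fun _ _ => Commute.all _ _)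
end main

section back
variable {R : Type*} [CommRing R] (lam a : R)

theorem hU : IsUnit (((algebraMap R (CC lam a)) a + algebraMap R (CC lam a) lam * xx lam a)
    ⊗ₜ[R] (1 : CC lam a)) :=
  (hux lam a).map
    (Algebra.TensorProduct.includeLeft : CC lam a →ₐ[R] CC lam a ⊗[R] CC lam a)

noncomputable def uu : CC lam a ⊗[R] CC lam a :=
  (1 ⊗ₜ[R] xx lam a - xx lam a ⊗ₜ[R] 1) * ((hU lam a).unit⁻¹).val

theorem uU : uu lam a * (((algebraMap R (CC lam a)) a + algebraMap R (CC lam a) lam * xx lam a)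
    ⊗ₜ[R] (1 : CC lam a)) = 1 ⊗ₜ[R] xx lam a - xx lam a ⊗ₜ[R] 1 := by
  rw [uu, mul_assoc, IsUnit.val_inv_mul, mul_one]

theorem swapC (r : R) : (algebraMap R (CC lam a) r) ⊗ₜ[R] (1 : CC lam a)
    = (1 : CC lam a) ⊗ₜ[R] (algebraMap R (CC lam a) r) := by
  rw [← Algebra.TensorProduct.algebraMap_apply, Algebra.TensorProduct.algebraMap_apply']

theorem key : (aeval (uu lam a)) ((1 + Polynomial.C lam * (X : R[X]))) *
    ((algebraMap R (CC lam a) a + algebraMap R (CC lam a) lam * xx lam a) ⊗ₜ[R] (1 : CC lam a))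
    = (1 : CC lam a) ⊗ₜ[R]
      (algebraMap R (CC lam a) a + algebraMap R (CC lam a) lam * xx lam a) := by
  rw [map_add, map_one, map_mul, aeval_C, aeval_X, add_mul, one_mul,
    mul_assoc ((algebraMap R (CC lam a ⊗[R] CC lam a)) lam) (uu lam a), uU]
  rw [← Algebra.smul_def lam (1 ⊗ₜ[R] xx lam a - xx lam a ⊗ₜ[R] 1), smul_sub,
    ]
  have e1 : lam • ((1 : CC lam a) ⊗ₜ[R] xx lam a)
      = (1 : CC lam a) ⊗ₜ[R] (algebraMap R (CC lam a) lam * xx lam a) := by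
    rw [← TensorProduct.tmul_smul, Algebra.smul_def]
  have e2 : lam • (xx lam a ⊗ₜ[R] (1 : CC lam a))
      = (algebraMap R (CC lam a) lam * xx lam a) ⊗ₜ[R] (1 : CC lam a) := by
    rw [TensorProduct.smul_tmul', Algebra.smul_def]
  rw [e1, e2, TensorProduct.add_tmul, TensorProduct.tmul_add, swapC]
  abel

theorem hBack : IsUnit ((aeval (uu lam a)) ((1 + Polynomial.C lam * (X : R[X])))) := by
  apply isUnit_of_mul_isUnit_left (y :=
    (algebraMap R (CC lam a) a + algebraMap R (CC lam a) lam * xx lam a) ⊗ₜ[R] (1 : CC lam a))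
  rw [key]
  exact (hux lam a).map
    (Algebra.TensorProduct.includeRight : CC lam a →ₐ[R] CC lam a ⊗[R] CC lam a)

noncomputable def ss : CC lam a ⊗[R] BB lam →ₐ[R] CC lam a ⊗[R] CC lam a :=
  Algebra.TensorProduct.lift Algebra.TensorProduct.includeLeft
    (locLift _ (aeval (uu lam a)) (hBack lam a)) (fun _ _ => Commute.all _ _)

theorem rr_left (c : CC lam a) : rr lam a (c ⊗ₜ[R] 1) = c ⊗ₜ[R] 1 := by
  rw [rr, Algebra.TensorProduct.lift_tmul, map_one, mul_one, Algebra.TensorProduct.includeLeft_apply]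

theorem rr_x : rr lam a (1 ⊗ₜ[R] xx lam a) = sFor lam a := by
  rw [rr, Algebra.TensorProduct.lift_tmul, map_one, one_mul, locLift_algebraMap, aeval_X]

theorem ss_left (c : CC lam a) : ss lam a (c ⊗ₜ[R] 1) = c ⊗ₜ[R] 1 := by
  rw [ss, Algebra.TensorProduct.lift_tmul, map_one, mul_one, Algebra.TensorProduct.includeLeft_apply]

theorem ss_t : ss lam a (1 ⊗ₜ[R] tt lam) = uu lam a := by
  rw [ss, Algebra.TensorProduct.lift_tmul, map_one, one_mul, locLift_algebraMap, aeval_X]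

end back

section comp
variable {R : Type*} [CommRing R] (lam a : R)

theorem ss_tmul_t (c : CC lam a) :
    ss lam a (c ⊗ₜ[R] tt lam) = (c ⊗ₜ[R] (1 : CC lam a)) * uu lam a := by
  have h : c ⊗ₜ[R] tt lam = (c ⊗ₜ[R] (1 : BB lam)) * ((1 : CC lam a) ⊗ₜ[R] tt lam) := by
    rw [Algebra.TensorProduct.tmul_mul_tmul, mul_one, one_mul]
  rw [h, map_mul, ss_left, ss_t]

theorem ss_sFor : ss lam a (sFor lam a) = 1 ⊗ₜ[R] xx lam a := by
  rw [sFor, map_add, map_add, ss_tmul_t, ss_left, ss_tmul_t]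
  have h : (algebraMap R (CC lam a) lam * xx lam a) ⊗ₜ[R] (1 : CC lam a) * uu lam a
        + xx lam a ⊗ₜ[R] 1 + (algebraMap R (CC lam a) a) ⊗ₜ[R] (1 : CC lam a) * uu lam a
      = xx lam a ⊗ₜ[R] 1 + uu lam a *
        ((algebraMap R (CC lam a) a + algebraMap R (CC lam a) lam * xx lam a)
          ⊗ₜ[R] (1 : CC lam a)) := by
    rw [TensorProduct.add_tmul]
    ring
  rw [h, uU]
  ring

theorem hU' : IsUnit (((algebraMap R (CC lam a)) a + algebraMap R (CC lam a) lam * xx lam a)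
    ⊗ₜ[R] (1 : BB lam)) :=
  (hux lam a).map
    (Algebra.TensorProduct.includeLeft : CC lam a →ₐ[R] CC lam a ⊗[R] BB lam)

theorem rr_uu : rr lam a (uu lam a) = 1 ⊗ₜ[R] tt lam := by
  apply (hU' lam a).mul_right_cancel
  conv_lhs => rw [show ((algebraMap R (CC lam a)) a + algebraMap R (CC lam a) lam * xx lam a)
      ⊗ₜ[R] (1 : BB lam) = rr lam a (((algebraMap R (CC lam a)) a
        + algebraMap R (CC lam a) lam * xx lam a) ⊗ₜ[R] (1 : CC lam a)) from
      (rr_left lam a _).symm, ← map_mul, uU, map_sub, rr_x, rr_left, sFor]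
  rw [Algebra.TensorProduct.tmul_mul_tmul, one_mul, mul_one, TensorProduct.add_tmul]
  ring

theorem comp1 : (ss lam a).comp (rr lam a) = AlgHom.id R (CC lam a ⊗[R] CC lam a) := by
  apply Algebra.TensorProduct.ext
  · apply locAlgHom_ext
    show ss lam a (rr lam a (xx lam a ⊗ₜ[R] 1)) = xx lam a ⊗ₜ[R] 1
    rw [rr_left, ss_left]
  · apply locAlgHom_ext
    show ss lam a (rr lam a (1 ⊗ₜ[R] xx lam a)) = 1 ⊗ₜ[R] xx lam a
    rw [rr_x, ss_sFor]

theorem comp2 : (rr lam a).comp (ss lam a) = AlgHom.id R (CC lam a ⊗[R] BB lam) := by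
  apply Algebra.TensorProduct.ext
  · apply locAlgHom_ext
    show rr lam a (ss lam a (xx lam a ⊗ₜ[R] 1)) = xx lam a ⊗ₜ[R] 1
    rw [ss_left, rr_left]
  · apply locAlgHom_ext
    show rr lam a (ss lam a (1 ⊗ₜ[R] tt lam)) = 1 ⊗ₜ[R] tt lam
    rw [ss_t, rr_uu]

noncomputable def req : (CC lam a ⊗[R] CC lam a) ≃ₐ[R] (CC lam a ⊗[R] BB lam) :=
  AlgEquiv.ofAlgHom (rr lam a) (ss lam a) (comp2 lam a) (comp1 lam a)

end comp


/-- For `C = R[X, 1/(a+λX)]` and `B = R[T, 1/(1+λT)]`, if `a` is invertible mod `λ`, the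
`R`-algebra map `r : C ⊗_R C → C ⊗_R B` with `X⊗1 ↦ X⊗1`,
`1⊗X ↦ λX⊗T + X⊗1 + a⊗T` is an isomorphism, whose inverse sends `X⊗1 ↦ X⊗1` and
`1⊗T ↦ (1⊗X - X⊗1)/((a+λX)⊗1)`. -/
theorem stmt12 (p : ℕ) [Fact p.Prime]
    (R : Type*) [CommRing R] [CharP R p] (lam a : R)
    (ha : IsUnit (Ideal.Quotient.mk (Ideal.span {lam}) a)) :
    let C := Localization.Away (Polynomial.C a + Polynomial.C lam * (X : Polynomial R))
    let B := Localization.Away (1 + Polynomial.C lam * (X : Polynomial R))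
    let x : C := algebraMap (Polynomial R) C X
    let t : B := algebraMap (Polynomial R) B X
    ∃ r : (C ⊗[R] C) ≃ₐ[R] (C ⊗[R] B),
      r (x ⊗ₜ[R] 1) = x ⊗ₜ[R] 1 ∧
      r (1 ⊗ₜ[R] x) = (algebraMap R C lam * x) ⊗ₜ[R] t + x ⊗ₜ[R] 1
          + (algebraMap R C a) ⊗ₜ[R] t ∧
      r.symm (x ⊗ₜ[R] 1) = x ⊗ₜ[R] 1 ∧
      r.symm (1 ⊗ₜ[R] t) * ((algebraMap R C a + algebraMap R C lam * x) ⊗ₜ[R] 1)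
          = 1 ⊗ₜ[R] x - x ⊗ₜ[R] 1 := by
  intro C B x t
  refine ⟨req lam a, rr_left lam a _, rr_x lam a, ?_, ?_⟩
  · show ss lam a (xx lam a ⊗ₜ[R] 1) = xx lam a ⊗ₜ[R] 1
    exact ss_left lam a _
  · show ss lam a (1 ⊗ₜ[R] tt lam) * _ = _
    rw [ss_t, uU]
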